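/- Let p ≥ 0 be real and let (A_N), (B_N) be real sequences with A_N/N² → A₂ ∈ ℝ and B_N/N → B₁ > 0. If −A₂/B₁² < min(p, 1), then lim_{N→∞} J_p(A_N, B_N) / ((A_N + p B_N²) e^{f_N(p)}) = 1, where f_N(k) = k A_N + k² B_N²/2. -/

import Mathlib

open MeasureTheory Real Filter

/-- The standard Gaussian density `φ(v) = e^{-v²/2}/√(2π)` on `ℝ`. -/
noncomputable def gaussPDF (v : ℝ) : ℝ := Real.exp (-v ^ 2 / 2) / Real.sqrt (2 * Real.pi)

/-- `J_p(A,B) = ∫_ℝ φ(v) (1 + e^{A+Bv})^p log(1 + e^{A+Bv}) dv`. -/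
noncomputable def Jint (p A B : ℝ) : ℝ :=
  ∫ v : ℝ, gaussPDF v * (1 + Real.exp (A + B * v)) ^ p * Real.log (1 + Real.exp (A + B * v))

/-- `f_N(k) = k A_N + k² B_N²/2`. -/
noncomputable def fExp (A B k : ℝ) : ℝ := k * A + k ^ 2 * B ^ 2 / 2

noncomputable def Kp (p : ℝ) : ℝ := 1 + p * Real.exp p + (2:ℝ) ^ p



lemma sqrt_two_pi_pos : 0 < Real.sqrt (2 * Real.pi) :=
  Real.sqrt_pos.2 (by positivity)

lemma gaussPDF_nonneg (v : ℝ) : 0 ≤ gaussPDF v := by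
  unfold gaussPDF; positivity

lemma gaussPDF_le (v : ℝ) : gaussPDF v ≤ Real.exp (-v ^ 2 / 2) := by
  unfold gaussPDF
  rw [div_le_iff₀ sqrt_two_pi_pos]
  nlinarith [Real.exp_pos (-v^2/2), Real.sq_sqrt (by positivity : (0:ℝ) ≤ 2*Real.pi),
    Real.sqrt_nonneg (2*Real.pi), Real.pi_gt_three]

lemma continuous_gaussPDF : Continuous gaussPDF := by
  unfold gaussPDF; fun_prop

lemma integrable_exp_quarter : Integrable (fun u : ℝ => Real.exp (-u ^ 2 / 4)) := by
  have := integrable_exp_neg_mul_sq (b := (1/4 : ℝ)) (by norm_num)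
  convert this using 2 with u
  ring_nf

lemma one_add_abs_le (u : ℝ) : (1 + |u|) * Real.exp (-u ^ 2 / 2) ≤ 2 * Real.exp (-u ^ 2 / 4) := by
  have h1 : (1 + |u|) ≤ 2 * Real.exp (u ^ 2 / 4) := by
    have h2 : |u| ≤ 1 + u ^ 2 / 4 := by nlinarith [sq_nonneg (|u| - 2), sq_abs u]
    have h3 : 1 + u ^ 2 / 4 ≤ Real.exp (u ^ 2 / 4) := by
      have := Real.add_one_le_exp (u ^ 2 / 4); linarith
    nlinarith [Real.exp_pos (u^2/4)]
  calc (1 + |u|) * Real.exp (-u ^ 2 / 2) ≤ (2 * Real.exp (u ^ 2 / 4)) * Real.exp (-u ^ 2 / 2) := by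
        apply mul_le_mul_of_nonneg_right h1 (Real.exp_pos _).le
    _ = 2 * Real.exp (-u ^ 2 / 4) := by rw [mul_assoc, ← Real.exp_add]; ring_nf

lemma integrable_gauss_one_abs : Integrable (fun u : ℝ => gaussPDF u * (1 + |u|)) := by
  apply Integrable.mono' (integrable_exp_quarter.const_mul 2)
  · exact (continuous_gaussPDF.mul (by fun_prop)).aestronglyMeasurable
  · filter_upwards with u
    have h0 : 0 ≤ gaussPDF u * (1 + |u|) :=
      mul_nonneg (gaussPDF_nonneg u) (by positivity)
    rw [Real.norm_of_nonneg h0]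
    calc gaussPDF u * (1 + |u|) ≤ Real.exp (-u^2/2) * (1 + |u|) := by
          apply mul_le_mul_of_nonneg_right (gaussPDF_le u) (by positivity)
      _ ≤ 2 * Real.exp (-u^2/4) := by rw [mul_comm]; exact one_add_abs_le u

lemma gauss_shift (c v : ℝ) :
    gaussPDF v * Real.exp (c * v) = Real.exp (c ^ 2 / 2) * gaussPDF (v - c) := by
  unfold gaussPDF
  have e : -v ^ 2 / 2 + c * v = c ^ 2 / 2 + -(v - c) ^ 2 / 2 := by ring
  rw [div_mul_eq_mul_div, ← Real.exp_add, e, Real.exp_add, mul_div_assoc]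

lemma integral_shift (c : ℝ) (h : ℝ → ℝ) :
    (∫ v : ℝ, gaussPDF v * (Real.exp (c * v) * h v))
      = Real.exp (c ^ 2 / 2) * ∫ u : ℝ, gaussPDF u * h (u + c) := by
  have key : ∀ v, gaussPDF v * (Real.exp (c * v) * h v)
      = Real.exp (c ^ 2 / 2) * (gaussPDF (v - c) * h ((v - c) + c)) := by
    intro v
    rw [sub_add_cancel, ← mul_assoc, gauss_shift, mul_assoc]
  simp_rw [key]
  rw [integral_const_mul]
  congr 1
  exact integral_sub_right_eq_self (fun w => gaussPDF w * h (w + c)) c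

lemma integral_gaussPDF : ∫ v : ℝ, gaussPDF v = 1 := by
  unfold gaussPDF
  rw [MeasureTheory.integral_div]
  have h2 : (∫ v : ℝ, Real.exp (-v ^ 2 / 2)) = Real.sqrt (2 * π) := by
    rw [show (fun v : ℝ => Real.exp (-v ^ 2 / 2))
        = (fun v : ℝ => Real.exp (-(1/2) * v ^ 2)) from funext fun v => by congr 1; ring]
    rw [integral_gaussian, show π / (1/2) = 2 * π by ring]
  rw [h2, div_self (ne_of_gt (Real.sqrt_pos.2 (by positivity)))]

lemma integral_gaussPDF_id : ∫ v : ℝ, gaussPDF v * v = 0 := by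
  have h1 : (∫ v : ℝ, gaussPDF (-v) * (-v)) = ∫ v : ℝ, gaussPDF v * v :=
    integral_neg_eq_self (fun v => gaussPDF v * v) _
  have h2 : ∀ v : ℝ, gaussPDF (-v) * (-v) = -(gaussPDF v * v) := by
    intro v; unfold gaussPDF; rw [show (-v)^2 = v^2 by ring]; ring
  simp_rw [h2, integral_neg] at h1
  linarith

lemma integrable_gauss : Integrable gaussPDF := by
  apply integrable_gauss_one_abs.mono' continuous_gaussPDF.aestronglyMeasurable
  filter_upwards with u
  rw [Real.norm_of_nonneg (gaussPDF_nonneg u)]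
  nlinarith [gaussPDF_nonneg u, abs_nonneg u]

lemma integrable_gauss_id : Integrable (fun v : ℝ => gaussPDF v * v) := by
  apply integrable_gauss_one_abs.mono' ((continuous_gaussPDF.mul continuous_id).aestronglyMeasurable)
  filter_upwards with u
  show ‖gaussPDF u * u‖ ≤ _
  rw [norm_mul, Real.norm_of_nonneg (gaussPDF_nonneg u), Real.norm_eq_abs]
  nlinarith [gaussPDF_nonneg u, abs_nonneg u]

lemma integrable_gauss_abs : Integrable (fun v : ℝ => gaussPDF v * |v|) := by
  apply integrable_gauss_one_abs.mono' ((continuous_gaussPDF.mul continuous_abs).aestronglyMeasurable)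
  filter_upwards with u
  show ‖gaussPDF u * |u|‖ ≤ _
  rw [norm_mul, Real.norm_of_nonneg (gaussPDF_nonneg u), Real.norm_of_nonneg (abs_nonneg u)]
  nlinarith [gaussPDF_nonneg u, abs_nonneg u]

lemma integral_gauss_abs_le : (∫ v : ℝ, gaussPDF v * |v|) ≤ 4 := by
  have h1 : (∫ v : ℝ, gaussPDF v * |v|) ≤ ∫ v : ℝ, Real.exp (-v ^ 2 / 4) := by
    apply integral_mono integrable_gauss_abs integrable_exp_quarter
    intro v
    have h2 : |v| ≤ Real.exp (v ^ 2 / 4) := by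
      have h3 : |v| ≤ 1 + v ^ 2 / 4 := by nlinarith [sq_nonneg (|v| - 2), sq_abs v]
      have h4 := Real.add_one_le_exp (v ^ 2 / 4); linarith
    calc gaussPDF v * |v| ≤ Real.exp (-v^2/2) * Real.exp (v^2/4) := by
          apply mul_le_mul (gaussPDF_le v) h2 (abs_nonneg v) (Real.exp_pos _).le
      _ = Real.exp (-v^2/4) := by rw [← Real.exp_add]; ring_nf
  have h2 : (∫ v : ℝ, Real.exp (-v ^ 2 / 4)) = Real.sqrt (π / (1/4)) := by
    rw [show (fun v : ℝ => Real.exp (-v ^ 2 / 4))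
        = (fun v : ℝ => Real.exp (-(1/4) * v ^ 2)) from funext fun v => by congr 1; ring]
    exact integral_gaussian _
  have h3 : Real.sqrt (π / (1/4)) ≤ 4 := by
    rw [show π / (1/4) = 4 * π by ring]
    have : (4 : ℝ) * π ≤ 16 := by nlinarith [Real.pi_le_four]
    calc Real.sqrt (4*π) ≤ Real.sqrt 16 := Real.sqrt_le_sqrt this
      _ = 4 := by rw [show (16:ℝ) = 4^2 by norm_num, Real.sqrt_sq (by norm_num)]
  linarith

lemma integrable_gauss_exp_one_abs (c : ℝ) :
    Integrable (fun v : ℝ => gaussPDF v * (Real.exp (c * v) * (1 + |v|))) := by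
  have hF : Integrable (fun u : ℝ => gaussPDF u * (1 + |u + c|)) := by
    apply (integrable_gauss_one_abs.const_mul (1 + |c|)).mono'
      ((continuous_gaussPDF.mul (continuous_const.add ((continuous_id.add continuous_const).abs))).aestronglyMeasurable)
    filter_upwards with u
    have h0 : (0:ℝ) ≤ gaussPDF u * (1 + |u + c|) :=
      mul_nonneg (gaussPDF_nonneg u) (by positivity)
    show ‖gaussPDF u * (1 + |u + c|)‖ ≤ _
    rw [Real.norm_of_nonneg h0]
    have : |u + c| ≤ |u| + |c| := abs_add_le u c
    nlinarith [gaussPDF_nonneg u, abs_nonneg u, abs_nonneg c,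
      mul_le_mul_of_nonneg_left this (gaussPDF_nonneg u),
      mul_nonneg (mul_nonneg (gaussPDF_nonneg u) (abs_nonneg c)) (abs_nonneg u)]
  have key : (fun v : ℝ => gaussPDF v * (Real.exp (c * v) * (1 + |v|)))
      = fun v : ℝ => Real.exp (c ^ 2 / 2) * (gaussPDF (v - c) * (1 + |(v - c) + c|)) := by
    funext v
    rw [sub_add_cancel, ← mul_assoc, gauss_shift, mul_assoc]
  rw [key]
  exact (hF.comp_sub_right c).const_mul _

lemma integrable_gauss_exp_affine (c a' b' : ℝ) :
    Integrable (fun v : ℝ => gaussPDF v * (Real.exp (c * v) * (a' + b' * v))) := by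
  apply ((integrable_gauss_exp_one_abs c).const_mul (|a'| + |b'|)).mono'
  · exact (continuous_gaussPDF.mul ((Real.continuous_exp.comp (continuous_const.mul
      continuous_id)).mul (continuous_const.add (continuous_const.mul continuous_id)))).aestronglyMeasurable
  · filter_upwards with v
    rw [norm_mul, norm_mul, Real.norm_of_nonneg (gaussPDF_nonneg v),
      Real.norm_of_nonneg (Real.exp_pos _).le, Real.norm_eq_abs]
    have h1 : |a' + b' * v| ≤ (|a'| + |b'|) * (1 + |v|) := by
      have := abs_add_le a' (b' * v)
      rw [abs_mul] at this
      nlinarith [abs_nonneg a', abs_nonneg b', abs_nonneg v, mul_nonneg (abs_nonneg b') (abs_nonneg v)]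
    calc gaussPDF v * (Real.exp (c*v) * |a' + b' * v|)
        ≤ gaussPDF v * (Real.exp (c*v) * ((|a'| + |b'|) * (1 + |v|))) := by
          apply mul_le_mul_of_nonneg_left _ (gaussPDF_nonneg v)
          exact mul_le_mul_of_nonneg_left h1 (Real.exp_pos _).le
      _ = (|a'| + |b'|) * (gaussPDF v * (Real.exp (c*v) * (1 + |v|))) := by ring

lemma integral_gauss_exp_affine (c a' b' : ℝ) :
    (∫ v : ℝ, gaussPDF v * (Real.exp (c * v) * (a' + b' * v)))
      = (a' + b' * c) * Real.exp (c ^ 2 / 2) := by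
  rw [integral_shift c (fun u => a' + b' * u)]
  have key : (fun u : ℝ => gaussPDF u * (a' + b' * (u + c)))
      = fun u : ℝ => (a' + b' * c) * gaussPDF u + b' * (gaussPDF u * u) := by
    funext u; ring
  rw [key, integral_add (integrable_gauss.const_mul _) (integrable_gauss_id.const_mul _),
    integral_const_mul, integral_const_mul, integral_gaussPDF, integral_gaussPDF_id]
  ring

lemma integral_gauss_exp_one_abs_le (c a' b' : ℝ) :
    (∫ v : ℝ, gaussPDF v * (Real.exp (c * v) * (1 + |a' + b' * v|)))
      ≤ (1 + |a' + b' * c| + 4 * |b'|) * Real.exp (c ^ 2 / 2) := by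
  rw [integral_shift c (fun u => 1 + |a' + b' * u|)]
  rw [mul_comm]
  apply mul_le_mul_of_nonneg_right _ (Real.exp_pos _).le
  have hle : (∫ u : ℝ, gaussPDF u * (1 + |a' + b' * (u + c)|))
      ≤ ∫ u : ℝ, ((1 + |a' + b' * c|) * gaussPDF u + |b'| * (gaussPDF u * |u|)) := by
    apply integral_mono_of_nonneg
    · filter_upwards with u
      exact mul_nonneg (gaussPDF_nonneg u) (by positivity)
    · exact (integrable_gauss.const_mul _).add (integrable_gauss_abs.const_mul _)
    · filter_upwards with u
      have h1 : |a' + b' * (u + c)| ≤ |a' + b' * c| + |b'| * |u| := by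
        have h2 : a' + b' * (u + c) = (a' + b' * c) + b' * u := by ring
        rw [h2]
        calc |(a' + b' * c) + b' * u| ≤ |a' + b' * c| + |b' * u| := abs_add_le _ _
          _ = |a' + b' * c| + |b'| * |u| := by rw [abs_mul]
      nlinarith [gaussPDF_nonneg u, mul_le_mul_of_nonneg_left h1 (gaussPDF_nonneg u)]
  rw [integral_add (integrable_gauss.const_mul _) (integrable_gauss_abs.const_mul _),
    integral_const_mul, integral_const_mul, integral_gaussPDF] at hle
  have h3 : |b'| * (∫ v : ℝ, gaussPDF v * |v|) ≤ |b'| * 4 :=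
    mul_le_mul_of_nonneg_left integral_gauss_abs_le (abs_nonneg b')
  linarith


lemma Kp_pos (p : ℝ) (hp : 0 ≤ p) : 0 < Kp p := by
  unfold Kp
  have := Real.rpow_pos_of_pos (by norm_num : (0:ℝ) < 2) p
  nlinarith [Real.exp_pos p]

lemma g_nonneg (p x : ℝ) : 0 ≤ (1 + Real.exp x) ^ p * Real.log (1 + Real.exp x) := by
  apply mul_nonneg (Real.rpow_nonneg (by positivity) p)
  apply Real.log_nonneg
  nlinarith [Real.exp_pos x]

lemma g_lower (p x : ℝ) (hp : 0 ≤ p) :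
    Real.exp (p * x) * x ≤ (1 + Real.exp x) ^ p * Real.log (1 + Real.exp x) := by
  rcases le_or_gt 0 x with hx | hx
  · have h1 : Real.exp (p * x) ≤ (1 + Real.exp x) ^ p := by
      rw [mul_comm, Real.exp_mul]
      exact Real.rpow_le_rpow (Real.exp_pos x).le (by nlinarith [Real.exp_pos x]) hp
    have h2 : x ≤ Real.log (1 + Real.exp x) := by
      calc x = Real.log (Real.exp x) := (Real.log_exp x).symm
        _ ≤ Real.log (1 + Real.exp x) := by
            apply Real.log_le_log (Real.exp_pos x)
            linarith
    calc Real.exp (p * x) * x ≤ (1 + Real.exp x) ^ p * x :=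
          mul_le_mul_of_nonneg_right h1 hx
      _ ≤ (1 + Real.exp x) ^ p * Real.log (1 + Real.exp x) := by
          apply mul_le_mul_of_nonneg_left h2 (Real.rpow_nonneg (by positivity) p)
  · have h1 : Real.exp (p * x) * x < 0 := mul_neg_of_pos_of_neg (Real.exp_pos _) hx
    linarith [g_nonneg p x]

lemma g_upper (p qp qm x : ℝ) (hp : 0 ≤ p) (hqp : p - 1 ≤ qp) (hqm1 : qm ≤ 1) (hqmp : qm ≤ p) :
    (1 + Real.exp x) ^ p * Real.log (1 + Real.exp x)
      ≤ Real.exp (p * x) * x + Kp p * ((1 + |x|) * (Real.exp (qp * x) + Real.exp (qm * x))) := by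
  have hK2 : (0:ℝ) < (2:ℝ) ^ p := Real.rpow_pos_of_pos (by norm_num) p
  have hC : (0:ℝ) ≤ p * Real.exp p := mul_nonneg hp (Real.exp_pos p).le
  rcases le_or_gt 0 x with hx | hx
  · -- x ≥ 0
    set u := Real.exp (-x) with hu
    have hu0 : 0 < u := Real.exp_pos _
    have hu1 : u ≤ 1 := Real.exp_le_one_iff.2 (by linarith)
    have hsplit : 1 + Real.exp x = Real.exp x * (1 + u) := by
      rw [mul_add, mul_one, ← Real.exp_add]
      simp
      ring
    have hpow : (1 + Real.exp x) ^ p = Real.exp (p * x) * (1 + u) ^ p := by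
      rw [hsplit, Real.mul_rpow (Real.exp_pos x).le (by positivity), ← Real.exp_mul, mul_comm x p]
    have hlog : Real.log (1 + Real.exp x) = x + Real.log (1 + u) := by
      rw [hsplit, Real.log_mul (Real.exp_ne_zero x) (by positivity), Real.log_exp]
    have hlogu : Real.log (1 + u) ≤ u := by
      have := Real.log_le_sub_one_of_pos (by positivity : (0:ℝ) < 1 + u)
      linarith
    have hlogu0 : 0 ≤ Real.log (1 + u) := Real.log_nonneg (by linarith)
    have hpu : (1 + u) ^ p ≤ 1 + (p * Real.exp p) * u := by
      have h1 : (1 + u) ^ p = Real.exp (Real.log (1 + u) * p) :=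
        Real.rpow_def_of_pos (by positivity) p
      have h2 : Real.exp (Real.log (1 + u) * p) ≤ Real.exp (p * u) := by
        apply Real.exp_le_exp.2
        rw [mul_comm]
        exact mul_le_mul_of_nonneg_left hlogu hp
      have h3 : Real.exp (p * u) ≤ 1 + (p * u) * Real.exp (p * u) := by
        have h4 := Real.add_one_le_exp (-(p * u))
        rw [Real.exp_neg] at h4
        have h4' := mul_le_mul_of_nonneg_left h4 (Real.exp_pos (p * u)).le
        rw [mul_inv_cancel₀ (Real.exp_ne_zero (p * u))] at h4'
        nlinarith [h4']
      have h5 : Real.exp (p * u) ≤ Real.exp p :=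
        Real.exp_le_exp.2 (by nlinarith)
      have h6 : (p * u) * Real.exp (p * u) ≤ (p * Real.exp p) * u := by
        nlinarith [mul_nonneg hp hu0.le]
      linarith
    have key : (1 + Real.exp x) ^ p * Real.log (1 + Real.exp x)
        ≤ Real.exp (p * x) * (x + (1 + p * Real.exp p) * ((1 + x) * u)) := by
      rw [hpow, hlog]
      have e1 : (1 + u) ^ p * (x + Real.log (1 + u))
          ≤ x + (1 + p * Real.exp p) * ((1 + x) * u) := by
        have e2 : (1 + u) ^ p * (x + Real.log (1 + u))
            ≤ (1 + (p * Real.exp p) * u) * (x + u) := by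
          apply mul_le_mul hpu (by linarith) (by positivity)
          nlinarith
        nlinarith [mul_nonneg hC (mul_nonneg hu0.le hx), mul_nonneg hu0.le hx,
          mul_nonneg (mul_nonneg hC hu0.le) (by linarith : (0:ℝ) ≤ 1 - u)]
      calc Real.exp (p*x) * (1+u)^p * (x + Real.log (1+u))
          = Real.exp (p*x) * ((1+u)^p * (x + Real.log (1+u))) := by ring
        _ ≤ Real.exp (p*x) * (x + (1 + p * Real.exp p) * ((1 + x) * u)) :=
            mul_le_mul_of_nonneg_left e1 (Real.exp_pos _).le
    have hshift : Real.exp (p * x) * u = Real.exp ((p - 1) * x) := by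
      rw [hu, ← Real.exp_add]
      congr 1
      ring
    have hmono : Real.exp ((p - 1) * x) ≤ Real.exp (qp * x) :=
      Real.exp_le_exp.2 (mul_le_mul_of_nonneg_right hqp hx)
    have habs : |x| = x := abs_of_nonneg hx
    have final : Real.exp (p*x) * (x + (1 + p * Real.exp p) * ((1 + x) * u))
        ≤ Real.exp (p * x) * x + Kp p * ((1 + |x|) * (Real.exp (qp * x) + Real.exp (qm * x))) := by
      have e3 : Real.exp (p*x) * ((1 + p * Real.exp p) * ((1 + x) * u))
          = (1 + p * Real.exp p) * ((1 + x) * Real.exp ((p-1)*x)) := by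
        rw [← hshift]; ring
      have e4 : (1 + p * Real.exp p) * ((1 + x) * Real.exp ((p-1)*x))
          ≤ Kp p * ((1 + |x|) * (Real.exp (qp * x) + Real.exp (qm * x))) := by
        rw [habs]
        have e5 : (1 + x) * Real.exp ((p-1)*x) ≤ (1 + x) * (Real.exp (qp*x) + Real.exp (qm*x)) := by
          apply mul_le_mul_of_nonneg_left _ (by linarith)
          nlinarith [Real.exp_pos (qm * x)]
        have e6 : (1 + p * Real.exp p) ≤ Kp p := by unfold Kp; nlinarith
        have e7 : (0:ℝ) ≤ (1 + x) * (Real.exp (qp*x) + Real.exp (qm*x)) := by positivity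
        calc (1 + p * Real.exp p) * ((1 + x) * Real.exp ((p-1)*x))
            ≤ (1 + p * Real.exp p) * ((1 + x) * (Real.exp (qp*x) + Real.exp (qm*x))) :=
              mul_le_mul_of_nonneg_left e5 (by linarith)
          _ ≤ Kp p * ((1 + x) * (Real.exp (qp*x) + Real.exp (qm*x))) :=
              mul_le_mul_of_nonneg_right e6 e7
      have expand : Real.exp (p*x) * (x + (1 + p * Real.exp p) * ((1 + x) * u))
          = Real.exp (p*x) * x + Real.exp (p*x) * ((1 + p * Real.exp p) * ((1 + x) * u)) := by
        ring
      rw [expand, e3]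
      linarith [e4]
    linarith
  · -- x < 0
    have h2p : (1 + Real.exp x) ^ p ≤ (2:ℝ) ^ p := by
      apply Real.rpow_le_rpow (by positivity) _ hp
      nlinarith [Real.exp_le_one_iff.2 hx.le]
    have hlg : Real.log (1 + Real.exp x) ≤ Real.exp x := by
      have := Real.log_le_sub_one_of_pos (by positivity : (0:ℝ) < 1 + Real.exp x)
      linarith
    have hg : (1 + Real.exp x) ^ p * Real.log (1 + Real.exp x) ≤ (2:ℝ)^p * Real.exp x := by
      apply mul_le_mul h2p hlg _ hK2.le
      apply Real.log_nonneg; nlinarith [Real.exp_pos x]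
    have hex : Real.exp x ≤ Real.exp (qm * x) :=
      Real.exp_le_exp.2 (by nlinarith)
    have hepx : Real.exp (p * x) ≤ Real.exp (qm * x) :=
      Real.exp_le_exp.2 (by nlinarith)
    have habs : |x| = -x := abs_of_neg hx
    have hmain : -(Real.exp (p * x) * x) ≤ (1 + |x|) * Real.exp (qm * x) := by
      rw [habs]
      have : -(Real.exp (p*x) * x) = Real.exp (p*x) * (-x) := by ring
      rw [this, mul_comm (1 + -x) (Real.exp (qm*x))]
      apply mul_le_mul hepx (by linarith) (by linarith) (by positivity)
    have hgb : (2:ℝ)^p * Real.exp x ≤ (2:ℝ)^p * ((1 + |x|) * Real.exp (qm * x)) := by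
      apply mul_le_mul_of_nonneg_left _ hK2.le
      nlinarith [Real.exp_pos (qm * x), abs_nonneg x, hex]
    have hKge : (2:ℝ)^p + 1 ≤ Kp p := by unfold Kp; nlinarith
    have hpos : (0:ℝ) ≤ (1 + |x|) * Real.exp (qm * x) := by positivity
    have hpos2 : (0:ℝ) ≤ (1 + |x|) * Real.exp (qp * x) := by positivity
    have h8 := mul_le_mul_of_nonneg_right hKge hpos
    have h9 : (0:ℝ) ≤ Kp p * ((1 + |x|) * Real.exp (qp * x)) :=
      mul_nonneg (Kp_pos p hp).le hpos2
    have heq : Kp p * ((1 + |x|) * (Real.exp (qp*x) + Real.exp (qm*x)))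
        = Kp p * ((1 + |x|) * Real.exp (qm*x)) + Kp p * ((1 + |x|) * Real.exp (qp*x)) := by
      ring
    have h10 : ((2:ℝ)^p + 1) * ((1 + |x|) * Real.exp (qm * x))
        = (2:ℝ)^p * ((1 + |x|) * Real.exp (qm * x)) + (1 + |x|) * Real.exp (qm * x) := by ring
    linarith [hg, hgb, hmain, h8, h9]

section perN
variable (p a b : ℝ)

noncomputable def Mf (v : ℝ) : ℝ := gaussPDF v * (Real.exp (p * (a + b * v)) * (a + b * v))
noncomputable def Wf (q a b : ℝ) (v : ℝ) : ℝ :=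
    gaussPDF v * ((1 + |a + b * v|) * Real.exp (q * (a + b * v)))

lemma Mf_eq : Mf p a b = fun v =>
    Real.exp (p * a) * (gaussPDF v * (Real.exp ((p * b) * v) * (a + b * v))) := by
  funext v
  unfold Mf
  rw [show p * (a + b * v) = p * a + (p * b) * v by ring, Real.exp_add]
  ring

lemma integrable_Mf : Integrable (Mf p a b) := by
  rw [Mf_eq]
  exact (integrable_gauss_exp_affine (p * b) a b).const_mul _

lemma integral_Mf : (∫ v : ℝ, Mf p a b v) = (a + p * b ^ 2) * Real.exp (p * a + p ^ 2 * b ^ 2 / 2) := by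
  rw [Mf_eq]
  simp only
  rw [integral_const_mul, integral_gauss_exp_affine, ← mul_assoc, mul_comm (Real.exp (p*a)),
    mul_assoc, ← Real.exp_add]
  ring_nf

lemma Wf_eq (q : ℝ) : Wf q a b = fun v =>
    Real.exp (q * a) * (gaussPDF v * (Real.exp ((q * b) * v) * (1 + |a + b * v|))) := by
  funext v
  unfold Wf
  rw [show q * (a + b * v) = q * a + (q * b) * v by ring, Real.exp_add]
  ring

lemma integrable_Wf (q : ℝ) : Integrable (Wf q a b) := by
  rw [Wf_eq]
  apply Integrable.const_mul
  apply ((integrable_gauss_exp_one_abs (q * b)).const_mul (1 + |a| + |b|)).mono'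
  · apply Continuous.aestronglyMeasurable
    exact continuous_gaussPDF.mul ((Real.continuous_exp.comp (continuous_const.mul
      continuous_id)).mul (continuous_const.add
        ((continuous_const.add (continuous_const.mul continuous_id)).abs)))
  · filter_upwards with v
    have h0 : 0 ≤ gaussPDF v * (Real.exp ((q*b) * v) * (1 + |a + b * v|)) :=
      mul_nonneg (gaussPDF_nonneg v) (by positivity)
    rw [Real.norm_of_nonneg h0]
    have h1 : 1 + |a + b * v| ≤ (1 + |a| + |b|) * (1 + |v|) := by
      have h2 : |a + b * v| ≤ |a| + |b| * |v| := by
        calc |a + b * v| ≤ |a| + |b * v| := abs_add_le _ _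
          _ = |a| + |b| * |v| := by rw [abs_mul]
      nlinarith [abs_nonneg a, abs_nonneg b, abs_nonneg v, mul_nonneg (abs_nonneg b) (abs_nonneg v)]
    calc gaussPDF v * (Real.exp ((q*b) * v) * (1 + |a + b * v|))
        ≤ gaussPDF v * (Real.exp ((q*b) * v) * ((1 + |a| + |b|) * (1 + |v|))) := by
          apply mul_le_mul_of_nonneg_left _ (gaussPDF_nonneg v)
          exact mul_le_mul_of_nonneg_left h1 (Real.exp_pos _).le
      _ = (1 + |a| + |b|) * (gaussPDF v * (Real.exp ((q*b) * v) * (1 + |v|))) := by ring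

lemma Wf_nonneg (q v : ℝ) : 0 ≤ Wf q a b v :=
  mul_nonneg (gaussPDF_nonneg v) (by positivity)

lemma integral_Wf_le (q : ℝ) : (∫ v : ℝ, Wf q a b v)
    ≤ (1 + |a + q * b ^ 2| + 4 * |b|) * Real.exp (q * a + q ^ 2 * b ^ 2 / 2) := by
  rw [Wf_eq]
  simp only
  rw [integral_const_mul]
  have h1 := integral_gauss_exp_one_abs_le (q * b) a b
  have h2 : (∫ v : ℝ, gaussPDF v * (Real.exp ((q*b) * v) * (1 + |a + b * v|)))
      ≤ (1 + |a + q * b ^ 2| + 4 * |b|) * Real.exp ((q*b) ^ 2 / 2) := by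
    rw [show a + b * (q * b) = a + q * b ^ 2 by ring] at h1
    exact h1
  calc Real.exp (q * a) * (∫ v : ℝ, gaussPDF v * (Real.exp ((q*b) * v) * (1 + |a + b * v|)))
      ≤ Real.exp (q * a) * ((1 + |a + q * b ^ 2| + 4 * |b|) * Real.exp ((q*b) ^ 2 / 2)) :=
        mul_le_mul_of_nonneg_left h2 (Real.exp_pos _).le
    _ = (1 + |a + q * b ^ 2| + 4 * |b|) * Real.exp (q * a + q ^ 2 * b ^ 2 / 2) := by
        rw [← mul_assoc, mul_comm (Real.exp (q*a)), mul_assoc, ← Real.exp_add]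
        ring_nf

end perN

section sandwich
variable (p a b qp qm : ℝ) (hp : 0 ≤ p) (hqp : p - 1 ≤ qp) (hqm1 : qm ≤ 1) (hqmp : qm ≤ p)

noncomputable def JF (p a b : ℝ) (v : ℝ) : ℝ :=
  gaussPDF v * (1 + Real.exp (a + b * v)) ^ p * Real.log (1 + Real.exp (a + b * v))

include hp hqp hqm1 hqmp

lemma JF_le (v : ℝ) : JF p a b v ≤ Mf p a b v + Kp p * (Wf qp a b v + Wf qm a b v) := by
  unfold JF Mf Wf
  rw [mul_assoc]
  have h1 := g_upper p qp qm (a + b * v) hp hqp hqm1 hqmp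
  calc gaussPDF v * ((1 + Real.exp (a + b*v)) ^ p * Real.log (1 + Real.exp (a + b*v)))
      ≤ gaussPDF v * (Real.exp (p * (a + b*v)) * (a + b*v)
          + Kp p * ((1 + |a + b*v|) * (Real.exp (qp * (a + b*v)) + Real.exp (qm * (a + b*v))))) :=
        mul_le_mul_of_nonneg_left h1 (gaussPDF_nonneg v)
    _ = gaussPDF v * (Real.exp (p * (a + b*v)) * (a + b*v))
        + Kp p * (gaussPDF v * ((1 + |a + b*v|) * Real.exp (qp * (a + b*v)))
          + gaussPDF v * ((1 + |a + b*v|) * Real.exp (qm * (a + b*v)))) := by ring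

omit hqp hqm1 hqmp in
lemma JF_ge (v : ℝ) : Mf p a b v ≤ JF p a b v := by
  unfold JF Mf
  rw [mul_assoc]
  exact mul_le_mul_of_nonneg_left (g_lower p (a + b * v) hp) (gaussPDF_nonneg v)

omit hp hqp hqm1 hqmp in
lemma JF_nonneg (v : ℝ) : 0 ≤ JF p a b v := by
  unfold JF
  rw [mul_assoc]
  exact mul_nonneg (gaussPDF_nonneg v) (g_nonneg p (a + b * v))

lemma integrable_JF : Integrable (JF p a b) := by
  have hWW : Integrable (fun v : ℝ => Wf qp a b v + Wf qm a b v) :=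
    (integrable_Wf a b qp).add (integrable_Wf a b qm)
  have habs : Integrable (fun v : ℝ => |Mf p a b v|) := (integrable_Mf p a b).abs
  have hbound : Integrable (fun v : ℝ => |Mf p a b v| + Kp p * (Wf qp a b v + Wf qm a b v)) :=
    habs.add (hWW.const_mul (Kp p))
  apply Integrable.mono' hbound
  · apply Continuous.aestronglyMeasurable
    unfold JF
    have hcont : Continuous fun v : ℝ => 1 + Real.exp (a + b * v) := by fun_prop
    apply (continuous_gaussPDF.mul (hcont.rpow_const fun v => Or.inl (by positivity))).mul
    apply Continuous.log hcont
    intro v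
    positivity
  · filter_upwards with v
    rw [Real.norm_of_nonneg (JF_nonneg p a b v)]
    have h1 := JF_le p a b qp qm hp hqp hqm1 hqmp v
    have h2 : Mf p a b v ≤ |Mf p a b v| := le_abs_self _
    linarith

lemma J_lower : (a + p * b ^ 2) * Real.exp (p * a + p ^ 2 * b ^ 2 / 2) ≤ Jint p a b := by
  rw [← integral_Mf p a b]
  exact integral_mono (integrable_Mf p a b) (integrable_JF p a b qp qm hp hqp hqm1 hqmp)
    (JF_ge p a b hp)

lemma J_upper : Jint p a b ≤ (a + p * b ^ 2) * Real.exp (p * a + p ^ 2 * b ^ 2 / 2)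
    + Kp p * ((1 + |a + qp * b ^ 2| + 4 * |b|) * Real.exp (qp * a + qp ^ 2 * b ^ 2 / 2)
      + (1 + |a + qm * b ^ 2| + 4 * |b|) * Real.exp (qm * a + qm ^ 2 * b ^ 2 / 2)) := by
  have hWW : Integrable (fun v : ℝ => Wf qp a b v + Wf qm a b v) :=
    (integrable_Wf a b qp).add (integrable_Wf a b qm)
  have hKWW : Integrable (fun v : ℝ => Kp p * (Wf qp a b v + Wf qm a b v)) :=
    hWW.const_mul (Kp p)
  have step1 : Jint p a b ≤ ∫ v : ℝ, (Mf p a b v + Kp p * (Wf qp a b v + Wf qm a b v)) :=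
    integral_mono (integrable_JF p a b qp qm hp hqp hqm1 hqmp)
      ((integrable_Mf p a b).add hKWW)
      (JF_le p a b qp qm hp hqp hqm1 hqmp)
  rw [integral_add (integrable_Mf p a b) hKWW,
    integral_const_mul, integral_add (integrable_Wf a b qp) (integrable_Wf a b qm),
    integral_Mf] at step1
  have h3 : (∫ v : ℝ, Wf qp a b v) + (∫ v : ℝ, Wf qm a b v)
      ≤ (1 + |a + qp * b ^ 2| + 4 * |b|) * Real.exp (qp * a + qp ^ 2 * b ^ 2 / 2)
        + (1 + |a + qm * b ^ 2| + 4 * |b|) * Real.exp (qm * a + qm ^ 2 * b ^ 2 / 2) :=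
    add_le_add (integral_Wf_le a b qp) (integral_Wf_le a b qm)
  have h4 := mul_le_mul_of_nonneg_left h3 (Kp_pos p hp).le
  linarith

end sandwich


lemma tendsto_sq_atTop : Tendsto (fun N : ℕ => ((N : ℝ)) ^ 2) atTop atTop := by
  apply Tendsto.comp (tendsto_pow_atTop (by norm_num : 2 ≠ 0)) tendsto_natCast_atTop_atTop

lemma ratio_tendsto_zero (p q A₂ B₁ : ℝ) (A B : ℕ → ℝ)
    (hA : Tendsto (fun N : ℕ => A N / (N : ℝ) ^ 2) atTop (nhds A₂))
    (hB : Tendsto (fun N : ℕ => B N / (N : ℝ)) atTop (nhds B₁))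
    (hden : 0 < A₂ + p * B₁ ^ 2)
    (hδ : (q - p) * A₂ + (q ^ 2 - p ^ 2) * B₁ ^ 2 / 2 < 0) :
    Tendsto (fun N : ℕ => ((1 + |A N + q * (B N) ^ 2| + 4 * |B N|)
      * Real.exp ((q - p) * A N + (q ^ 2 - p ^ 2) * (B N) ^ 2 / 2)) / (A N + p * (B N) ^ 2))
      atTop (nhds 0) := by
  have hb2 : Tendsto (fun N : ℕ => (B N) ^ 2 / (N : ℝ) ^ 2) atTop (nhds (B₁ ^ 2)) := by
    have h := hB.mul hB
    have e : ∀ N : ℕ, (B N / (N:ℝ)) * (B N / (N:ℝ)) = (B N) ^ 2 / (N:ℝ) ^ 2 := by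
      intro N; rw [div_mul_div_comm]; ring_nf
    simp_rw [e] at h
    convert h using 2
    ring
  have hden2 : Tendsto (fun N : ℕ => (A N + p * (B N) ^ 2) / (N : ℝ) ^ 2)
      atTop (nhds (A₂ + p * B₁ ^ 2)) := by
    have h := hA.add ((hb2.const_mul p))
    have e : ∀ N : ℕ, A N / (N:ℝ)^2 + p * ((B N)^2 / (N:ℝ)^2)
        = (A N + p * (B N)^2) / (N:ℝ)^2 := by
      intro N; rw [add_div, mul_div_assoc]
    simp_rw [e] at h
    exact h
  have habsB : Tendsto (fun N : ℕ => |B N| / (N : ℝ) ^ 2) atTop (nhds 0) := by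
    have h1 : Tendsto (fun N : ℕ => B N / (N : ℝ) ^ 2) atTop (nhds 0) := by
      have h := hB.mul (tendsto_one_div_atTop_nhds_zero_nat)
      rw [mul_zero] at h
      have e : ∀ N : ℕ, (B N / (N:ℝ)) * (1 / (N:ℝ)) = B N / (N:ℝ)^2 := by
        intro N; rw [div_mul_div_comm]; ring_nf
      simp_rw [e] at h
      exact h
    have h2 := h1.abs
    rw [abs_zero] at h2
    have e : ∀ N : ℕ, |B N / (N:ℝ)^2| = |B N| / (N:ℝ)^2 := by
      intro N
      rw [abs_div, abs_of_nonneg (by positivity : (0:ℝ) ≤ ((N:ℝ))^2)]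
    simp_rw [e] at h2
    exact h2
  have hnum : Tendsto (fun N : ℕ => (1 + |A N + q * (B N) ^ 2| + 4 * |B N|) / (N : ℝ) ^ 2)
      atTop (nhds (|A₂ + q * B₁ ^ 2|)) := by
    have habs : Tendsto (fun N : ℕ => |A N + q * (B N) ^ 2| / (N : ℝ) ^ 2)
        atTop (nhds (|A₂ + q * B₁ ^ 2|)) := by
      have h := (hA.add (hb2.const_mul q)).abs
      have e : ∀ N : ℕ, |A N / (N:ℝ)^2 + q * ((B N)^2 / (N:ℝ)^2)|
          = |A N + q * (B N)^2| / (N:ℝ)^2 := by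
        intro N
        rw [show A N / (N:ℝ)^2 + q * ((B N)^2 / (N:ℝ)^2) = (A N + q * (B N)^2) / (N:ℝ)^2 by
          rw [add_div, mul_div_assoc]]
        rw [abs_div, abs_of_nonneg (by positivity : (0:ℝ) ≤ ((N:ℝ))^2)]
      simp_rw [e] at h
      exact h
    have hone : Tendsto (fun N : ℕ => ((N : ℝ) ^ 2)⁻¹) atTop (nhds 0) :=
      tendsto_sq_atTop.inv_tendsto_atTop
    have h := (hone.add habs).add (habsB.const_mul 4)
    have e : ∀ N : ℕ, ((N:ℝ)^2)⁻¹ + |A N + q * (B N)^2| / (N:ℝ)^2 + 4 * (|B N| / (N:ℝ)^2)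
        = (1 + |A N + q * (B N) ^ 2| + 4 * |B N|) / (N : ℝ) ^ 2 := by
      intro N
      rw [add_div, add_div, inv_eq_one_div, mul_div_assoc]
    simp_rw [e] at h
    have : (0 : ℝ) + |A₂ + q * B₁ ^ 2| + 4 * 0 = |A₂ + q * B₁ ^ 2| := by ring
    rwa [this] at h
  -- prefactor tendsto
  have hpref : Tendsto (fun N : ℕ => (1 + |A N + q * (B N) ^ 2| + 4 * |B N|)
      / (A N + p * (B N) ^ 2)) atTop (nhds (|A₂ + q * B₁ ^ 2| / (A₂ + p * B₁ ^ 2))) := by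
    have h := hnum.div hden2 (ne_of_gt hden)
    apply h.congr'
    filter_upwards [eventually_ge_atTop 1] with N hN
    simp only [Pi.div_apply]
    have hn : ((N:ℝ))^2 ≠ 0 := by
      have : (1:ℝ) ≤ (N:ℝ) := by exact_mod_cast hN
      positivity
    rcases eq_or_ne (A N + p * (B N)^2) 0 with h0 | h0
    · rw [h0, zero_div, div_zero, div_zero]
    · field_simp
  -- exponential tendsto
  have hexp : Tendsto (fun N : ℕ => Real.exp ((q - p) * A N + (q ^ 2 - p ^ 2) * (B N) ^ 2 / 2))
      atTop (nhds 0) := by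
    have hc : Tendsto (fun N : ℕ => ((q - p) * A N + (q ^ 2 - p ^ 2) * (B N) ^ 2 / 2) / (N:ℝ)^2)
        atTop (nhds ((q - p) * A₂ + (q ^ 2 - p ^ 2) * B₁ ^ 2 / 2)) := by
      have h := (hA.const_mul (q - p)).add ((hb2.const_mul ((q^2 - p^2)/2)))
      have e : ∀ N : ℕ, (q - p) * (A N / (N:ℝ)^2) + ((q^2 - p^2)/2) * ((B N)^2 / (N:ℝ)^2)
          = ((q - p) * A N + (q ^ 2 - p ^ 2) * (B N) ^ 2 / 2) / (N:ℝ)^2 := by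
        intro N
        rw [add_div]
        ring
      simp_rw [e] at h
      convert h using 2
      ring
    have hbot : Tendsto (fun N : ℕ => (q - p) * A N + (q ^ 2 - p ^ 2) * (B N) ^ 2 / 2)
        atTop atBot := by
      have h := Filter.Tendsto.neg_mul_atTop hδ hc tendsto_sq_atTop
      apply h.congr'
      filter_upwards [eventually_ge_atTop 1] with N hN
      have hn : ((N:ℝ))^2 ≠ 0 := by
        have : (1:ℝ) ≤ (N:ℝ) := by exact_mod_cast hN
        positivity
      exact div_mul_cancel₀ _ hn
    exact Real.tendsto_exp_atBot.comp hbot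
  have h := hpref.mul hexp
  rw [mul_zero] at h
  apply h.congr
  intro N
  rw [div_mul_eq_mul_div]

/-- First case of Proposition S2: for `p ≥ 0` and `-A₂/B₁² < min(p, 1)`,
`J_p(A_N, B_N) ≈ (A_N + p B_N²) e^{f_N(p)}` at leading order. -/
theorem Jint_asymptotics_first (p A₂ B₁ : ℝ) (hp : 0 ≤ p) (A B : ℕ → ℝ)
    (hA : Tendsto (fun N : ℕ => A N / (N : ℝ) ^ 2) atTop (nhds A₂))
    (hB : Tendsto (fun N : ℕ => B N / (N : ℝ)) atTop (nhds B₁))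
    (hB₁ : 0 < B₁) (h1 : -A₂ / B₁ ^ 2 < min p 1) :
    Tendsto (fun N : ℕ => Jint p (A N) (B N)
        / ((A N + p * (B N) ^ 2) * Real.exp (fExp (A N) (B N) p))) atTop (nhds 1) := by
  set qm : ℝ := -A₂ / B₁ ^ 2 with hqm_def
  set qp : ℝ := max (p - 1) qm with hqp_def
  have hB1s : (0:ℝ) < B₁ ^ 2 := by positivity
  have hqm_p : qm < p := lt_of_lt_of_le h1 (min_le_left _ _)
  have hqm_1 : qm < 1 := lt_of_lt_of_le h1 (min_le_right _ _)
  have hqp_ge : p - 1 ≤ qp := le_max_left _ _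
  have hA2eq : A₂ = -qm * B₁ ^ 2 := by
    rw [hqm_def]
    field_simp
  have hden0 : 0 < A₂ + p * B₁ ^ 2 := by
    rw [hA2eq]; nlinarith
  have hsq : 0 < (qm - p) ^ 2 := by
    have h2 := mul_pos (sub_pos.2 hqm_p) (sub_pos.2 hqm_p)
    nlinarith
  have hδm : (qm - p) * A₂ + (qm ^ 2 - p ^ 2) * B₁ ^ 2 / 2 < 0 := by
    rw [hA2eq]; nlinarith [mul_pos hB1s hsq]
  have hδp : (qp - p) * A₂ + (qp ^ 2 - p ^ 2) * B₁ ^ 2 / 2 < 0 := by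
    rcases le_or_gt qm (p - 1) with h | h
    · rw [hqp_def, max_eq_left h, hA2eq]
      nlinarith [mul_pos hB1s (show (0:ℝ) < p - 1/2 - qm by nlinarith)]
    · rw [hqp_def, max_eq_right h.le, hA2eq]
      nlinarith [mul_pos hB1s hsq]
  have hXp := ratio_tendsto_zero p qp A₂ B₁ A B hA hB hden0 hδp
  have hXm := ratio_tendsto_zero p qm A₂ B₁ A B hA hB hden0 hδm
  -- denominator positivity, eventually
  have hb2 : Tendsto (fun N : ℕ => (B N) ^ 2 / (N : ℝ) ^ 2) atTop (nhds (B₁ ^ 2)) := by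
    have h := hB.mul hB
    have e : ∀ N : ℕ, (B N / (N:ℝ)) * (B N / (N:ℝ)) = (B N) ^ 2 / (N:ℝ) ^ 2 := by
      intro N; rw [div_mul_div_comm]; ring_nf
    simp_rw [e] at h
    convert h using 2
    ring
  have hden2 : Tendsto (fun N : ℕ => (A N + p * (B N) ^ 2) / (N : ℝ) ^ 2)
      atTop (nhds (A₂ + p * B₁ ^ 2)) := by
    have h := hA.add ((hb2.const_mul p))
    have e : ∀ N : ℕ, A N / (N:ℝ)^2 + p * ((B N)^2 / (N:ℝ)^2)
        = (A N + p * (B N)^2) / (N:ℝ)^2 := by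
      intro N; rw [add_div, mul_div_assoc]
    simp_rw [e] at h
    exact h
  have hev : ∀ᶠ N : ℕ in atTop, 0 < A N + p * (B N) ^ 2 := by
    have h2 : ∀ᶠ N : ℕ in atTop, 0 < (A N + p * (B N) ^ 2) / (N : ℝ) ^ 2 :=
      hden2.eventually (eventually_gt_nhds hden0)
    filter_upwards [h2, eventually_ge_atTop 1] with N hN1 hN2
    have hn : (0:ℝ) < ((N:ℝ))^2 := by
      have : (1:ℝ) ≤ (N:ℝ) := by exact_mod_cast hN2
      positivity
    have := mul_pos hN1 hn
    rwa [div_mul_cancel₀ _ (ne_of_gt hn)] at this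
  -- upper comparison function
  have htu : Tendsto (fun N : ℕ => 1 + Kp p *
      ((((1 + |A N + qp * (B N) ^ 2| + 4 * |B N|)
      * Real.exp ((qp - p) * A N + (qp ^ 2 - p ^ 2) * (B N) ^ 2 / 2)) / (A N + p * (B N) ^ 2))
      + (((1 + |A N + qm * (B N) ^ 2| + 4 * |B N|)
      * Real.exp ((qm - p) * A N + (qm ^ 2 - p ^ 2) * (B N) ^ 2 / 2)) / (A N + p * (B N) ^ 2))))
      atTop (nhds 1) := by
    have h := (tendsto_const_nhds (x := (1:ℝ)) (f := atTop)).add ((hXp.add hXm).const_mul (Kp p))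
    rw [add_zero, mul_zero, add_zero] at h
    exact h
  apply tendsto_of_tendsto_of_tendsto_of_le_of_le' (tendsto_const_nhds (x := (1:ℝ))) htu
  · -- lower bound eventually
    filter_upwards [hev] with N hN
    have hE : 0 < Real.exp (fExp (A N) (B N) p) := Real.exp_pos _
    rw [le_div_iff₀ (mul_pos hN hE), one_mul]
    have := J_lower p (A N) (B N) qp qm hp hqp_ge hqm_1.le hqm_p.le
    have hfe : fExp (A N) (B N) p = p * A N + p ^ 2 * (B N) ^ 2 / 2 := rfl
    rw [hfe]
    exact this
  · -- upper bound eventually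
    filter_upwards [hev] with N hN
    have hE : 0 < Real.exp (fExp (A N) (B N) p) := Real.exp_pos _
    rw [div_le_iff₀ (mul_pos hN hE)]
    have hJu := J_upper p (A N) (B N) qp qm hp hqp_ge hqm_1.le hqm_p.le
    have hfe : fExp (A N) (B N) p = p * A N + p ^ 2 * (B N) ^ 2 / 2 := rfl
    have hXpE : ((1 + |A N + qp * (B N) ^ 2| + 4 * |B N|)
        * Real.exp ((qp - p) * A N + (qp ^ 2 - p ^ 2) * (B N) ^ 2 / 2))
        * Real.exp (fExp (A N) (B N) p)
        = (1 + |A N + qp * (B N) ^ 2| + 4 * |B N|)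
          * Real.exp (qp * A N + qp ^ 2 * (B N) ^ 2 / 2) := by
      rw [hfe, mul_assoc, ← Real.exp_add]
      congr 2
      ring
    have hXmE : ((1 + |A N + qm * (B N) ^ 2| + 4 * |B N|)
        * Real.exp ((qm - p) * A N + (qm ^ 2 - p ^ 2) * (B N) ^ 2 / 2))
        * Real.exp (fExp (A N) (B N) p)
        = (1 + |A N + qm * (B N) ^ 2| + 4 * |B N|)
          * Real.exp (qm * A N + qm ^ 2 * (B N) ^ 2 / 2) := by
      rw [hfe, mul_assoc, ← Real.exp_add]
      congr 2
      ring
    have expand : (1 + Kp p *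
        ((((1 + |A N + qp * (B N) ^ 2| + 4 * |B N|)
        * Real.exp ((qp - p) * A N + (qp ^ 2 - p ^ 2) * (B N) ^ 2 / 2)) / (A N + p * (B N) ^ 2))
        + (((1 + |A N + qm * (B N) ^ 2| + 4 * |B N|)
        * Real.exp ((qm - p) * A N + (qm ^ 2 - p ^ 2) * (B N) ^ 2 / 2)) / (A N + p * (B N) ^ 2))))
        * ((A N + p * (B N) ^ 2) * Real.exp (fExp (A N) (B N) p))
        = (A N + p * (B N) ^ 2) * Real.exp (fExp (A N) (B N) p)
          + Kp p * (((1 + |A N + qp * (B N) ^ 2| + 4 * |B N|)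
              * Real.exp ((qp - p) * A N + (qp ^ 2 - p ^ 2) * (B N) ^ 2 / 2))
                * Real.exp (fExp (A N) (B N) p)
            + ((1 + |A N + qm * (B N) ^ 2| + 4 * |B N|)
              * Real.exp ((qm - p) * A N + (qm ^ 2 - p ^ 2) * (B N) ^ 2 / 2))
                * Real.exp (fExp (A N) (B N) p)) := by
      have hd : A N + p * (B N) ^ 2 ≠ 0 := hN.ne'
      rw [← add_div, ← mul_div_assoc, add_mul, one_mul, div_mul_eq_mul_div,
        mul_div_assoc (Kp p * (_ + _)), mul_div_cancel_left₀ _ hd]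
      ring
    rw [expand, hXpE, hXmE, hfe]
    exact hJu
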